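/- arXiv:1205.0143 — 7 statements merged into one kernel-verified Lean document; each statement's English description precedes it below -/
import Mathlib

section
/- Let F be a group, R ⊆ F, Φ ⊆ End(F), and let N be the normal closure of ⋃_{σ∈Φ*} R^σ in F. If S is a subset of N, then the normal closure of ⋃_{σ∈Φ*} (R ∪ S)^σ equals N. -/
/-- Tietze transformation adding iterated relations: if `S` is contained in the
normal closure of `⋃_{σ ∈ Φ*} R^σ`, then the normal closure of
`⋃_{σ ∈ Φ*} (R ∪ S)^σ` equals that normal closure. -/
theorem normalClosure_add_iterated_relations {F : Type*} [Group F]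
    (R S : Set F) (Φ : Set (Monoid.End F))
    (hS : S ⊆ (Subgroup.normalClosure (⋃ σ ∈ Submonoid.closure Φ, ⇑σ '' R) : Set F)) :
    Subgroup.normalClosure (⋃ σ ∈ Submonoid.closure Φ, ⇑σ '' (R ∪ S)) =
      Subgroup.normalClosure (⋃ σ ∈ Submonoid.closure Φ, ⇑σ '' R) := by
  set U : Set F := ⋃ σ ∈ Submonoid.closure Φ, ⇑σ '' R with hU
  set N := Subgroup.normalClosure U with hN
  -- the union U is invariant under each σ in the closure
  have hinv : ∀ σ ∈ Submonoid.closure Φ, ⇑σ '' U ⊆ U := by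
    intro σ hσ x hx
    obtain ⟨y, hy, rfl⟩ := hx
    simp only [hU, Set.mem_iUnion] at hy ⊢
    obtain ⟨τ, hτ, r, hr, rfl⟩ := hy
    exact ⟨σ * τ, mul_mem hσ hτ, r, hr, rfl⟩
  -- hence N is invariant under each σ in the closure
  have hNinv : ∀ σ ∈ Submonoid.closure Φ, ∀ x ∈ N, σ x ∈ N := by
    intro σ hσ x hx
    have hmap : Subgroup.map (MonoidHomClass.toMonoidHom σ) N ≤ N := by
      rw [Subgroup.map_le_iff_le_comap]
      have : Subgroup.Normal (Subgroup.comap (MonoidHomClass.toMonoidHom σ) N) :=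
        Subgroup.Normal.comap (Subgroup.normalClosure_normal) _
      refine Subgroup.normalClosure_le_normal ?_
      intro u hu
      exact Subgroup.subset_normalClosure (hinv σ hσ ⟨u, hu, rfl⟩)
    exact hmap ⟨x, hx, rfl⟩
  refine le_antisymm ?_ (Subgroup.normalClosure_mono ?_)
  · refine Subgroup.normalClosure_le_normal ?_
    intro x hx
    simp only [Set.mem_iUnion] at hx
    obtain ⟨σ, hσ, r, hr, rfl⟩ := hx
    rcases hr with hr | hr
    · exact Subgroup.subset_normalClosure (by
        simp only [hU, Set.mem_iUnion]; exact ⟨σ, hσ, r, hr, rfl⟩)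
    · exact hNinv σ hσ r (hS hr)
  · exact Set.iUnion₂_mono fun σ _ => Set.image_mono Set.subset_union_left
end

section
/- Let F be a group, R ⊆ F, Φ ⊆ End(F), and S ⊆ R. Then the set Q₀ := ⋃_{σ∈Φ*} R^σ and the set Q₁ := S ∪ ⋃_{σ∈Φ*} ((R \ S) ∪ {ψ(r) : r ∈ S, ψ ∈ Φ})^σ have equal normal closures in F (in fact Q₀ = Q₁ as subsets of F). -/
/-- Tietze transformation interchanging fixed and iterated relations:
for `S ⊆ R`, the sets `Q₀ = ⋃_{σ∈Φ*} R^σ` and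
`Q₁ = S ∪ ⋃_{σ∈Φ*} ((R \ S) ∪ {ψ(r) : r ∈ S, ψ ∈ Φ})^σ`
coincide, and in particular have the same normal closure in `F`. -/
theorem iterated_relations_interchange_fixed {F : Type*} [Group F]
    (R S : Set F) (Φ : Set (Monoid.End F)) (hS : S ⊆ R) :
    (⋃ σ ∈ Submonoid.closure Φ, ⇑σ '' R) =
        S ∪ ⋃ σ ∈ Submonoid.closure Φ,
          ⇑σ '' ((R \ S) ∪ {w | ∃ r ∈ S, ∃ ψ ∈ Φ, w = ψ r}) ∧
      Subgroup.normalClosure (⋃ σ ∈ Submonoid.closure Φ, ⇑σ '' R) =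
        Subgroup.normalClosure (S ∪ ⋃ σ ∈ Submonoid.closure Φ,
          ⇑σ '' ((R \ S) ∪ {w | ∃ r ∈ S, ∃ ψ ∈ Φ, w = ψ r})) := by
  set T : Set F := (R \ S) ∪ {w | ∃ r ∈ S, ∃ ψ ∈ Φ, w = ψ r} with hT
  set Q₁ : Set F := S ∪ ⋃ σ ∈ Submonoid.closure Φ, ⇑σ '' T with hQ₁
  have key : ∀ σ ∈ Submonoid.closure Φ, ∀ r ∈ S, σ r ∈ Q₁ := by
    intro σ hσ
    induction hσ using Submonoid.closure_induction with
    | mem ψ hψ =>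
        intro r hr
        refine Or.inr (Set.mem_biUnion (Submonoid.one_mem _) ?_)
        exact ⟨ψ r, Or.inr ⟨r, hr, ψ, hψ, rfl⟩, rfl⟩
    | one => intro r hr; exact Or.inl hr
    | mul σ τ hσ hτ ihσ ihτ =>
        intro r hr
        have : (σ * τ) r = σ (τ r) := rfl
        rw [this]
        rcases ihτ r hr with h | h
        · exact ihσ (τ r) h
        · rcases Set.mem_iUnion₂.1 h with ⟨μ, hμ, y, hy, hyy⟩
          refine Or.inr (Set.mem_biUnion (mul_mem hσ hμ) ⟨y, hy, ?_⟩)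
          simp [← hyy]
  have hset : (⋃ σ ∈ Submonoid.closure Φ, ⇑σ '' R) = Q₁ := by
    apply Set.Subset.antisymm
    · intro x hx
      rcases Set.mem_iUnion₂.1 hx with ⟨σ, hσ, r, hr, hrx⟩
      by_cases hrS : r ∈ S
      · exact hrx ▸ key σ hσ r hrS
      · exact Or.inr (Set.mem_biUnion hσ ⟨r, Or.inl ⟨hr, hrS⟩, hrx⟩)
    · intro x hx
      rcases hx with hx | hx
      · exact Set.mem_biUnion (Submonoid.one_mem _) ⟨x, hS hx, rfl⟩
      · rcases Set.mem_iUnion₂.1 hx with ⟨σ, hσ, y, hy, hyx⟩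
        rcases hy with hy | ⟨r, hr, ψ, hψ, rfl⟩
        · exact Set.mem_biUnion hσ ⟨y, hy.1, hyx⟩
        · refine Set.mem_biUnion (mul_mem hσ (Submonoid.subset_closure hψ))
            ⟨r, hS hr, ?_⟩
          simpa using hyx
  exact ⟨hset, by rw [hset]⟩
end

section
/- Let F be a group, R ⊆ F, and let Φ, Ψ ⊆ End(F) with Ψ ⊆ Φ. Set Φ̂ := (Φ \ Ψ) ∪ {σ∘ψ : ψ ∈ Ψ, σ ∈ Φ} (maps applied as g ↦ ψ(σ(g)) when elements act on the right, i.e. g^{σψ} = (g^σ)^ψ). Then ⋃_{σ∈Φ*} R^σ = ⋃_{σ∈Φ̂*} (R ∪ ⋃_{ψ∈Ψ} R^ψ)^σ. -/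
/-- Tietze transformation modifying the set of substitutions:
with `Ψ ⊆ Φ` and `Φ̂ = (Φ \ Ψ) ∪ {σψ : ψ ∈ Ψ, σ ∈ Φ}` (endomorphisms acting on
the right, so `g^{σψ} = (g^σ)^ψ`, i.e. the composite `ψ ∘ σ`, which is `ψ * σ`
in `Monoid.End`), one has
`⋃_{σ∈Φ*} R^σ = ⋃_{σ∈Φ̂*} (R ∪ ⋃_{ψ∈Ψ} R^ψ)^σ`. -/
theorem iterated_relations_modify_substitutions {F : Type*} [Group F]
    (R : Set F) (Φ Ψ : Set (Monoid.End F)) (hΨ : Ψ ⊆ Φ) :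
    (⋃ σ ∈ Submonoid.closure Φ, ⇑σ '' R) =
      ⋃ σ ∈ Submonoid.closure ((Φ \ Ψ) ∪ {τ | ∃ ψ ∈ Ψ, ∃ σ ∈ Φ, τ = ψ * σ}),
        ⇑σ '' (R ∪ ⋃ ψ ∈ Ψ, ⇑ψ '' R) := by
  set Φhat : Set (Monoid.End F) :=
    (Φ \ Ψ) ∪ {τ | ∃ ψ ∈ Ψ, ∃ σ ∈ Φ, τ = ψ * σ} with hΦhat
  -- S is the set of endomorphisms of the form μ or μ*ψ with μ ∈ ⟨Φ̂⟩, ψ ∈ Ψ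
  set S : Set (Monoid.End F) :=
    {σ | ∃ μ ∈ Submonoid.closure Φhat, σ = μ ∨ ∃ ψ ∈ Ψ, σ = μ * ψ} with hS
  have hhat_mem : ∀ τ ∈ Φhat, τ ∈ Submonoid.closure Φ := by
    rintro τ (⟨hτ, -⟩ | ⟨ψ, hψ, σ, hσ, rfl⟩)
    · exact Submonoid.subset_closure hτ
    · exact mul_mem (Submonoid.subset_closure (hΨ hψ)) (Submonoid.subset_closure hσ)
  have hhatle : Submonoid.closure Φhat ≤ Submonoid.closure Φ :=
    Submonoid.closure_le.2 hhat_mem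
  -- Claim C: σ ∈ Φ, μ ∈ ⟨Φ̂⟩ implies σ * μ ∈ S
  have claimC : ∀ μ ∈ Submonoid.closure Φhat, ∀ σ ∈ Φ, σ * μ ∈ S := by
    intro μ hμ
    induction hμ using Submonoid.closure_induction_left with
    | one =>
      intro σ hσ
      by_cases hσΨ : σ ∈ Ψ
      · exact ⟨1, one_mem _, Or.inr ⟨σ, hσΨ, by rw [mul_one, one_mul]⟩⟩
      · exact ⟨σ * 1, mul_mem (Submonoid.subset_closure (Or.inl ⟨hσ, hσΨ⟩)) (one_mem _),
          Or.inl rfl⟩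
    | mul_left g hg μ' hμ' ih =>
      intro σ hσ
      by_cases hσΨ : σ ∈ Ψ
      · rcases hg with hg | ⟨ψ', hψ', σ', hσ', rfl⟩
        · -- g ∈ Φ \ Ψ : σ * g ∈ Φ̂
          refine ⟨σ * g * μ', mul_mem (Submonoid.subset_closure
            (Or.inr ⟨σ, hσΨ, g, hg.1, rfl⟩)) hμ', Or.inl (by rw [mul_assoc])⟩
        · -- g = ψ' * σ'
          obtain ⟨ν, hν, hcase⟩ := ih σ' hσ'
          have hσψ' : σ * ψ' ∈ Submonoid.closure Φhat :=
            Submonoid.subset_closure (Or.inr ⟨σ, hσΨ, ψ', hΨ hψ', rfl⟩)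
          rcases hcase with heq | ⟨ψ'', hψ'', heq⟩
          · exact ⟨σ * ψ' * ν, mul_mem hσψ' hν,
              Or.inl (by rw [mul_assoc ψ' σ' μ', heq, ← mul_assoc])⟩
          · exact ⟨σ * ψ' * ν, mul_mem hσψ' hν,
              Or.inr ⟨ψ'', hψ'', by rw [mul_assoc ψ' σ' μ', heq, ← mul_assoc, ← mul_assoc]⟩⟩
      · exact ⟨σ * (g * μ'), mul_mem (Submonoid.subset_closure (Or.inl ⟨hσ, hσΨ⟩))
          (mul_mem (Submonoid.subset_closure hg) hμ'), Or.inl rfl⟩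
  -- Every element of ⟨Φ⟩ lies in S
  have key : ∀ σ ∈ Submonoid.closure Φ, σ ∈ S := by
    intro σ hσ
    induction hσ using Submonoid.closure_induction_left with
    | one => exact ⟨1, one_mem _, Or.inl rfl⟩
    | mul_left g hg τ hτ ih =>
      obtain ⟨μ, hμ, hcase⟩ := ih
      rcases hcase with heq | ⟨ψ, hψ, heq⟩
      · rw [heq]; exact claimC μ hμ g hg
      · obtain ⟨ν, hν, hcase'⟩ := claimC μ hμ g hg
        rcases hcase' with h | ⟨ψ', hψ', h⟩
        · exact ⟨ν, hν, Or.inr ⟨ψ, hψ, by rw [heq, ← mul_assoc, h]⟩⟩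
        · refine ⟨ν * (ψ' * ψ), mul_mem hν (Submonoid.subset_closure
            (Or.inr ⟨ψ', hψ', ψ, hΨ hψ, rfl⟩)), Or.inl ?_⟩
          rw [heq, ← mul_assoc, h, mul_assoc]
  ext x
  simp only [Set.mem_iUnion, Set.mem_image]
  constructor
  · rintro ⟨σ, hσ, r, hr, rfl⟩
    obtain ⟨μ, hμ, hcase⟩ := key σ hσ
    rcases hcase with heq | ⟨ψ, hψ, heq⟩
    · exact ⟨μ, hμ, r, Or.inl hr, by rw [heq]⟩
    · refine ⟨μ, hμ, ψ r, Or.inr ?_, by rw [heq]; rfl⟩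
      exact Set.mem_iUnion₂.2 ⟨ψ, hψ, r, hr, rfl⟩
  · rintro ⟨μ, hμ, s, hs | hs, rfl⟩
    · exact ⟨μ, hhatle hμ, s, hs, rfl⟩
    · obtain ⟨ψ, hψ, r, hr, rfl⟩ := Set.mem_iUnion₂.1 hs
      exact ⟨μ * ψ, mul_mem (hhatle hμ) (Submonoid.subset_closure (hΨ hψ)), r, hr, rfl⟩
end

section
/- Let F be a group, R ⊆ F, Φ ⊆ End(F), and let N be the normal closure of ⋃_{σ∈Φ*} R^σ in F. If Ψ ⊆ End(F) is a set of endomorphisms each of which leaves N invariant (ψ(N) ⊆ N for all ψ ∈ Ψ), then the normal closure of ⋃_{σ∈(Φ∪Ψ)*} R^σ in F equals N. -/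
/-- Tietze transformation adding substitutions: if every `ψ ∈ Ψ` leaves the
normal closure `N` of `⋃_{σ∈Φ*} R^σ` invariant, then the normal closure of
`⋃_{σ∈(Φ∪Ψ)*} R^σ` equals `N`. -/
theorem normalClosure_add_substitutions {F : Type*} [Group F]
    (R : Set F) (Φ Ψ : Set (Monoid.End F))
    (hΨ : ∀ ψ ∈ Ψ, ∀ x ∈ Subgroup.normalClosure (⋃ σ ∈ Submonoid.closure Φ, ⇑σ '' R),
      ψ x ∈ Subgroup.normalClosure (⋃ σ ∈ Submonoid.closure Φ, ⇑σ '' R)) :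
    Subgroup.normalClosure (⋃ σ ∈ Submonoid.closure (Φ ∪ Ψ), ⇑σ '' R) =
      Subgroup.normalClosure (⋃ σ ∈ Submonoid.closure Φ, ⇑σ '' R) := by
  set S : Set F := ⋃ σ ∈ Submonoid.closure Φ, ⇑σ '' R with hS
  set N : Subgroup F := Subgroup.normalClosure S with hN
  -- key: if σ maps S into N, then σ maps N into N
  have key : ∀ σ : Monoid.End F, (∀ x ∈ S, σ x ∈ N) → ∀ x ∈ N, σ x ∈ N := by
    intro σ hσ x hx
    have hnorm : (N.comap (σ : F →* F)).Normal :=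
      Subgroup.Normal.comap Subgroup.normalClosure_normal _
    have : N ≤ N.comap (σ : F →* F) :=
      Subgroup.normalClosure_le_normal (fun y hy => hσ y hy)
    exact this hx
  have hSN : S ⊆ N := Subgroup.subset_normalClosure
  -- every σ in the closure of Φ ∪ Ψ maps N into N
  have main : ∀ σ ∈ Submonoid.closure (Φ ∪ Ψ), ∀ x ∈ N, σ x ∈ N := by
    intro σ hσ
    induction hσ using Submonoid.closure_induction with
    | mem τ hτ =>
      rcases hτ with hτ | hτ
      · refine key τ ?_
        intro x hx
        simp only [hS, Set.mem_iUnion] at hx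
        obtain ⟨ρ, hρ, r, hr, rfl⟩ := hx
        apply hSN
        simp only [hS, Set.mem_iUnion]
        exact ⟨τ * ρ, mul_mem (Submonoid.subset_closure hτ) hρ, r, hr, rfl⟩
      · exact hΨ τ hτ
    | one => intro x hx; exact hx
    | mul τ ρ _ _ hτ hρ => intro x hx; exact hτ (ρ x) (hρ x hx)
  apply le_antisymm
  · apply Subgroup.normalClosure_le_normal
    intro x hx
    simp only [Set.mem_iUnion] at hx
    obtain ⟨σ, hσ, r, hr, rfl⟩ := hx
    refine main σ hσ r (hSN ?_)
    simp only [hS, Set.mem_iUnion]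
    exact ⟨1, one_mem _, r, hr, rfl⟩
  · exact Subgroup.normalClosure_mono <| Set.iUnion₂_mono' fun σ hσ =>
      ⟨σ, Submonoid.closure_mono Set.subset_union_left hσ, le_rfl⟩
end

section
/- Let F be the free group on generators a, b and let σ be the endomorphism of F induced by a ↦ ab, b ↦ b². Let N be the normal closure in F of the set {σⁿ(a²), σⁿ(b²) : n ≥ 0}. Then the quotient F/N is an abelian group in which every element has order dividing 2; in particular F/N is a quotient of ℤ/2 × ℤ/2 and hence finite, so F/N is not isomorphic to the infinite group ℤ/2 * ℤ/2. -/
/-- The free group on two generators `a = of true`, `b = of false`. -/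
abbrev F₂ : Type := FreeGroup Bool

/-- The endomorphism of `F(a,b)` induced by `a ↦ a·b`, `b ↦ b·b`. -/
def σab : Monoid.End F₂ :=
  (FreeGroup.lift fun g : Bool =>
    if g then FreeGroup.of true * FreeGroup.of false
    else FreeGroup.of false * FreeGroup.of false : FreeGroup Bool →* FreeGroup Bool)

/-- Normal closure of `{σⁿ(a²), σⁿ(b²) : n ≥ 0}`. -/
def Nab : Subgroup F₂ :=
  Subgroup.normalClosure
    {w : F₂ | ∃ n : ℕ, w = (σab ^ n) (FreeGroup.of true ^ 2) ∨
      w = (σab ^ n) (FreeGroup.of false ^ 2)}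

instance : Nab.Normal := Subgroup.normalClosure_normal

/-! ### Auxiliary material -/

theorem c2aux {G : Type*} [Group G] (x : G) (hx : x ^ 2 = 1) :
    ∀ u v : ZMod 2, x ^ (u + v).val = x ^ u.val * x ^ v.val := by
  have hxx : x * x = 1 := by rw [← sq]; exact hx
  have h2 : ((1 + 1 : ZMod 2)).val = 0 := by decide
  have h1 : ((1 : ZMod 2)).val = 1 := by decide
  have h0 : ((0 : ZMod 2)).val = 0 := by decide
  intro u v
  rw [ZMod.val_add]
  have hu := ZMod.val_lt u
  have hv := ZMod.val_lt v
  generalize u.val = a at *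
  generalize v.val = b at *
  interval_cases a <;> interval_cases b <;> simp [hxx]

/-- Hom from `C₂` determined by an element of order dividing 2. -/
def homC2 {G : Type*} [Group G] (x : G) (hx : x ^ 2 = 1) :
    Multiplicative (ZMod 2) →* G where
  toFun z := x ^ (Multiplicative.toAdd z).val
  map_one' := by simp
  map_mul' z w := c2aux x hx _ _

@[simp] theorem homC2_gen {G : Type*} [Group G] (x : G) (hx : x ^ 2 = 1) :
    homC2 x hx (Multiplicative.ofAdd 1) = x := by
  show x ^ (1 : ZMod 2).val = x
  have h1 : ((1 : ZMod 2)).val = 1 := by decide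
  simp [h1]

/-- The projection. -/
noncomputable def πab : F₂ →* F₂ ⧸ Nab := QuotientGroup.mk' Nab

theorem mem_ha2 : (FreeGroup.of true : F₂) ^ 2 ∈ Nab :=
  Subgroup.subset_normalClosure ⟨0, Or.inl (by simp)⟩

theorem mem_hb2 : (FreeGroup.of false : F₂) ^ 2 ∈ Nab :=
  Subgroup.subset_normalClosure ⟨0, Or.inr (by simp)⟩

theorem mem_hab2 : ((FreeGroup.of true : F₂) * FreeGroup.of false) ^ 2 ∈ Nab := by
  refine Subgroup.subset_normalClosure ⟨1, Or.inl ?_⟩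
  have h1 : (σab ^ 1) ((FreeGroup.of true : F₂) ^ 2) = (σab (FreeGroup.of true)) ^ 2 := by
    simp [map_pow]
  have h2 : σab (FreeGroup.of true : F₂) = FreeGroup.of true * FreeGroup.of false := by
    rw [σab]; erw [FreeGroup.lift_apply_of]; simp
  rw [h1, h2]

theorem A_sq : (πab (FreeGroup.of true)) ^ 2 = 1 := by
  rw [← map_pow]; exact (QuotientGroup.eq_one_iff _).mpr mem_ha2

theorem B_sq : (πab (FreeGroup.of false)) ^ 2 = 1 := by
  rw [← map_pow]; exact (QuotientGroup.eq_one_iff _).mpr mem_hb2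

theorem AB_sq : (πab (FreeGroup.of true) * πab (FreeGroup.of false)) ^ 2 = 1 := by
  rw [← map_mul, ← map_pow]; exact (QuotientGroup.eq_one_iff _).mpr mem_hab2

theorem AB_comm :
    Commute (πab (FreeGroup.of true)) (πab (FreeGroup.of false)) := by
  set A := πab (FreeGroup.of true)
  set B := πab (FreeGroup.of false)
  have hA : A⁻¹ = A := by
    rw [inv_eq_iff_mul_eq_one, ← sq]; exact A_sq
  have hB : B⁻¹ = B := by
    rw [inv_eq_iff_mul_eq_one, ← sq]; exact B_sq
  have h : (A * B)⁻¹ = A * B := by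
    rw [inv_eq_iff_mul_eq_one, ← sq]; exact AB_sq
  calc A * B = (A * B)⁻¹ := h.symm
    _ = B⁻¹ * A⁻¹ := by rw [mul_inv_rev]
    _ = B * A := by rw [hA, hB]

theorem gen_mem (w : F₂) :
    πab w ∈ Subgroup.closure ({πab (FreeGroup.of true), πab (FreeGroup.of false)} :
      Set (F₂ ⧸ Nab)) := by
  induction w using FreeGroup.induction_on with
  | C1 => rw [map_one]; exact one_mem _
  | of x =>
    cases x
    · exact Subgroup.subset_closure (Set.mem_insert_of_mem _ rfl)
    · exact Subgroup.subset_closure (Set.mem_insert _ _)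
  | inv_of x ih => rw [map_inv]; exact inv_mem ih
  | mul x y ihx ihy => rw [map_mul]; exact mul_mem ihx ihy

theorem gen_top :
    Subgroup.closure ({πab (FreeGroup.of true), πab (FreeGroup.of false)} :
      Set (F₂ ⧸ Nab)) = ⊤ := by
  rw [eq_top_iff]
  intro g _
  obtain ⟨w, rfl⟩ := QuotientGroup.mk'_surjective Nab g
  exact gen_mem w

theorem Q_commute : ∀ g h : F₂ ⧸ Nab, Commute g h := by
  have base : ∀ x ∈ ({πab (FreeGroup.of true), πab (FreeGroup.of false)} :
      Set (F₂ ⧸ Nab)), ∀ y ∈ ({πab (FreeGroup.of true), πab (FreeGroup.of false)} :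
      Set (F₂ ⧸ Nab)), Commute x y := by
    rintro x (rfl | rfl) y (rfl | rfl)
    · exact Commute.refl _
    · exact AB_comm
    · exact AB_comm.symm
    · exact Commute.refl _
  intro g h
  have hg : g ∈ Subgroup.closure ({πab (FreeGroup.of true), πab (FreeGroup.of false)} :
      Set (F₂ ⧸ Nab)) := by rw [gen_top]; trivial
  have hh : h ∈ Subgroup.closure ({πab (FreeGroup.of true), πab (FreeGroup.of false)} :
      Set (F₂ ⧸ Nab)) := by rw [gen_top]; trivial
  exact Subgroup.closure_induction₂
    (p := fun x y _ _ => Commute x y)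
    (fun x y hx hy => base x hx y hy)
    (fun x _ => Commute.one_left x) (fun x _ => Commute.one_right x)
    (fun x y z _ _ _ h1 h2 => h1.mul_left h2)
    (fun x y z _ _ _ h1 h2 => h1.mul_right h2)
    (fun x y _ _ h1 => h1.inv_left)
    (fun x y _ _ h1 => h1.inv_right) hg hh

theorem Q_comm : ∀ g h : F₂ ⧸ Nab, g * h = h * g := fun g h => Q_commute g h

theorem Q_sq : ∀ g : F₂ ⧸ Nab, g ^ 2 = 1 := by
  intro g
  have hg : g ∈ Subgroup.closure ({πab (FreeGroup.of true), πab (FreeGroup.of false)} :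
      Set (F₂ ⧸ Nab)) := by rw [gen_top]; trivial
  induction hg using Subgroup.closure_induction with
  | mem x hx =>
    rcases hx with rfl | rfl
    · exact A_sq
    · exact B_sq
  | one => simp
  | mul x y _ _ ihx ihy =>
    rw [(Q_commute x y).mul_pow, ihx, ihy, one_mul]
  | inv x _ ihx => rw [inv_pow, ihx, inv_one]

/-- The surjection from `C₂ × C₂`. -/
noncomputable def qab :
    Multiplicative (ZMod 2) × Multiplicative (ZMod 2) →* F₂ ⧸ Nab :=
  MonoidHom.noncommCoprod (homC2 (πab (FreeGroup.of true)) A_sq)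
    (homC2 (πab (FreeGroup.of false)) B_sq) (fun _ _ => Q_comm _ _)

theorem qab_surj : Function.Surjective qab := by
  rw [← MonoidHom.range_eq_top]
  rw [eq_top_iff, ← gen_top, Subgroup.closure_le]
  rintro x (rfl | rfl)
  · exact ⟨(Multiplicative.ofAdd 1, 1), by
      show (homC2 (πab (FreeGroup.of true)) A_sq) (Multiplicative.ofAdd 1) *
        (homC2 (πab (FreeGroup.of false)) B_sq) 1 = _; simp⟩
  · exact ⟨(1, Multiplicative.ofAdd 1), by
      show (homC2 (πab (FreeGroup.of true)) A_sq) 1 *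
        (homC2 (πab (FreeGroup.of false)) B_sq) (Multiplicative.ofAdd 1) = _; simp⟩

theorem coprod_infinite :
    Infinite (Monoid.Coprod (Multiplicative (ZMod 2)) (Multiplicative (ZMod 2))) := by
  set D := DihedralGroup 0
  have hs : ∀ i : ZMod 0, (DihedralGroup.sr i : D) ^ 2 = 1 := by
    intro i; rw [sq, DihedralGroup.sr_mul_sr, sub_self, DihedralGroup.one_def]
  set ψ : Monoid.Coprod (Multiplicative (ZMod 2)) (Multiplicative (ZMod 2)) →* D :=
    Monoid.Coprod.lift (homC2 (DihedralGroup.sr 0) (hs 0))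
      (homC2 (DihedralGroup.sr 1) (hs 1))
  set c : Monoid.Coprod (Multiplicative (ZMod 2)) (Multiplicative (ZMod 2)) :=
    Monoid.Coprod.inl (Multiplicative.ofAdd 1) * Monoid.Coprod.inr (Multiplicative.ofAdd 1)
  have hc : ψ c = DihedralGroup.r 1 := by
    show ψ (Monoid.Coprod.inl _ * Monoid.Coprod.inr _) = _
    rw [map_mul, Monoid.Coprod.lift_apply_inl, Monoid.Coprod.lift_apply_inr,
      homC2_gen, homC2_gen, DihedralGroup.sr_mul_sr, sub_zero]
  refine Infinite.of_injective (fun n : ℕ => c ^ n) (fun m n hmn => ?_)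
  have hmn' : c ^ m = c ^ n := hmn
  have h1 : ψ (c ^ m) = ψ (c ^ n) := by rw [hmn']
  rw [map_pow, map_pow, hc, DihedralGroup.r_one_pow, DihedralGroup.r_one_pow] at h1
  have h2 : ((m : ZMod 0)) = (n : ZMod 0) := DihedralGroup.r.inj h1
  exact_mod_cast h2

/-- The quotient `F/N` of the free group `F(a,b)` by the normal closure of all
iterated images `σⁿ(a²), σⁿ(b²)` (where `σ : a ↦ ab, b ↦ b²`) is abelian of
exponent dividing 2; it is a quotient of `ℤ/2 × ℤ/2`, hence finite, and in
particular not isomorphic to the infinite free product `ℤ/2 * ℤ/2`. -/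
theorem quotient_of_noninvariant_Lpresentation_is_finite :
    (∀ g h : F₂ ⧸ Nab, g * h = h * g) ∧
    (∀ g : F₂ ⧸ Nab, g ^ 2 = 1) ∧
    (∃ q : Multiplicative (ZMod 2) × Multiplicative (ZMod 2) →* F₂ ⧸ Nab,
      Function.Surjective q) ∧
    Finite (F₂ ⧸ Nab) ∧
    IsEmpty ((F₂ ⧸ Nab) ≃*
      Monoid.Coprod (Multiplicative (ZMod 2)) (Multiplicative (ZMod 2))) := by
  have hfin : Finite (F₂ ⧸ Nab) := Finite.of_surjective qab qab_surj
  refine ⟨Q_comm, Q_sq, ⟨qab, qab_surj⟩, hfin, ⟨fun e => ?_⟩⟩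
  have := coprod_infinite
  have : Finite (Monoid.Coprod (Multiplicative (ZMod 2)) (Multiplicative (ZMod 2))) :=
    Finite.of_equiv _ e.toEquiv
  exact not_finite (Monoid.Coprod (Multiplicative (ZMod 2)) (Multiplicative (ZMod 2)))
end

section
/- Let F be a group, X a generating set of F that freely generates F, Φ ⊆ End(F), S a subset of the normal closure N_Φ(R) := ⟨⋃_{φ∈Φ*} R^φ⟩^F for some R ⊆ F, and σ ∈ Φ. Define σ̃ ∈ End(F) by σ̃(x) = σ(x)·r_x for each x ∈ X, where each r_x ∈ S. Then the normal closure of ⋃_{φ∈Φ*} (R ∪ S)^φ in F equals the normal closure of ⋃_{φ∈Ψ*} (R ∪ S)^φ, where Ψ := (Φ \ {σ}) ∪ {σ̃}. -/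
/-- If `φ` lies in the submonoid generated by `T`, then `φ` maps the normal
closure of `⋃ ψ ∈ closure T, ψ '' B` into itself. -/
private lemma aux_inv {G : Type*} [Group G] (T : Set (Monoid.End G)) (B : Set G)
    {φ : Monoid.End G} (hφ : φ ∈ Submonoid.closure T) {g : G}
    (hg : g ∈ Subgroup.normalClosure (⋃ ψ ∈ Submonoid.closure T, ⇑ψ '' B)) :
    φ g ∈ Subgroup.normalClosure (⋃ ψ ∈ Submonoid.closure T, ⇑ψ '' B) := by
  haveI hn : (Subgroup.normalClosure (⋃ ψ ∈ Submonoid.closure T, ⇑ψ '' B)).Normal :=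
    Subgroup.normalClosure_normal
  haveI : ((Subgroup.normalClosure (⋃ ψ ∈ Submonoid.closure T, ⇑ψ '' B)).comap
      (φ : G →* G)).Normal := hn.comap _
  refine Subgroup.normalClosure_le_normal
    (N := (Subgroup.normalClosure (⋃ ψ ∈ Submonoid.closure T, ⇑ψ '' B)).comap
      (φ : G →* G)) ?_ hg
  rintro x hx
  obtain ⟨ψ, hψ, b, hb, rfl⟩ := by
    simpa only [Set.mem_iUnion, Set.mem_image] using hx
  rw [SetLike.mem_coe]
  refine Subgroup.mem_comap.mpr ?_
  have hcomp : (φ : G →* G) (ψ b) = (φ * ψ) b := rfl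
  refine hcomp ▸ ?_
  exact Subgroup.subset_normalClosure
    (Set.mem_iUnion₂.mpr ⟨φ * ψ, mul_mem hφ hψ, ⟨b, hb, rfl⟩⟩)

/-- Modifying a substitution of an L-presentation: if `S` is contained in the
normal closure of `⋃_{φ∈Φ*} R^φ`, `σ ∈ Φ`, and `σ̃` is the endomorphism of the
free group `F(X)` with `σ̃(x) = σ(x)·r_x` for elements `r_x ∈ S`, then with
`Ψ = (Φ \ {σ}) ∪ {σt}` the normal closures of `⋃_{φ∈Φ*} (R ∪ S)^φ` and
`⋃_{φ∈Ψ*} (R ∪ S)^φ` coincide. -/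
theorem normalClosure_modify_substitution {X : Type*}
    (Φ : Set (Monoid.End (FreeGroup X))) (R S : Set (FreeGroup X))
    (hS : S ⊆ (Subgroup.normalClosure
      (⋃ φ ∈ Submonoid.closure Φ, ⇑φ '' R) : Set (FreeGroup X)))
    (σ : Monoid.End (FreeGroup X)) (hσ : σ ∈ Φ)
    (r : X → FreeGroup X) (hr : ∀ x, r x ∈ S)
    (σt : Monoid.End (FreeGroup X))
    (hσt : ∀ x, σt (FreeGroup.of x) = σ (FreeGroup.of x) * r x) :
    Subgroup.normalClosure (⋃ φ ∈ Submonoid.closure Φ, ⇑φ '' (R ∪ S)) =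
      Subgroup.normalClosure
        (⋃ φ ∈ Submonoid.closure ((Φ \ {σ}) ∪ {σt}), ⇑φ '' (R ∪ S)) := by
  classical
  set Ψ : Set (Monoid.End (FreeGroup X)) := (Φ \ {σ}) ∪ {σt} with hΨdef
  set N : Subgroup (FreeGroup X) :=
    Subgroup.normalClosure (⋃ φ ∈ Submonoid.closure Φ, ⇑φ '' (R ∪ S)) with hNdef
  set M : Subgroup (FreeGroup X) :=
    Subgroup.normalClosure (⋃ φ ∈ Submonoid.closure Ψ, ⇑φ '' (R ∪ S)) with hMdef
  haveI hNnormal : N.Normal := Subgroup.normalClosure_normal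
  haveI hMnormal : M.Normal := Subgroup.normalClosure_normal
  -- key: σ and σt agree modulo any normal subgroup containing all r x
  have key : ∀ (K : Subgroup (FreeGroup X)), K.Normal → (∀ x, r x ∈ K) →
      ∀ g : FreeGroup X, (σ g ∈ K ↔ σt g ∈ K) := by
    intro K hK hrK g
    haveI := hK
    have heq : (QuotientGroup.mk' K).comp (σ : FreeGroup X →* FreeGroup X)
        = (QuotientGroup.mk' K).comp (σt : FreeGroup X →* FreeGroup X) := by
      apply FreeGroup.ext_hom
      intro x
      show (QuotientGroup.mk' K) (σ (FreeGroup.of x)) = (QuotientGroup.mk' K) (σt (FreeGroup.of x))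
      simp only [hσt, map_mul]
      rw [show (QuotientGroup.mk' K) (r x) = 1 from
        (QuotientGroup.eq_one_iff (r x)).mpr (hrK x), mul_one]
    have hg : (QuotientGroup.mk' K) (σ g) = (QuotientGroup.mk' K) (σt g) :=
      DFunLike.congr_fun heq g
    constructor <;> intro h
    · exact (QuotientGroup.eq_one_iff (σt g)).mp
        (by rw [show ((σt g : FreeGroup X) : FreeGroup X ⧸ K)
                  = (QuotientGroup.mk' K) (σt g) from rfl, ← hg]
            exact (QuotientGroup.eq_one_iff (σ g)).mpr h)
    · exact (QuotientGroup.eq_one_iff (σ g)).mp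
        (by rw [show ((σ g : FreeGroup X) : FreeGroup X ⧸ K)
                  = (QuotientGroup.mk' K) (σ g) from rfl, hg]
            exact (QuotientGroup.eq_one_iff (σt g)).mpr h)
  -- R ∪ S is contained in both closures (via the identity endomorphism)
  have hRSN : R ∪ S ⊆ (N : Set (FreeGroup X)) := fun t ht =>
    Subgroup.subset_normalClosure
      (Set.mem_iUnion₂.mpr ⟨1, one_mem _, ⟨t, ht, rfl⟩⟩)
  have hRSM : R ∪ S ⊆ (M : Set (FreeGroup X)) := fun t ht =>
    Subgroup.subset_normalClosure
      (Set.mem_iUnion₂.mpr ⟨1, one_mem _, ⟨t, ht, rfl⟩⟩)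
  have hrN : ∀ x, r x ∈ N := fun x => hRSN (Or.inr (hr x))
  have hrM : ∀ x, r x ∈ M := fun x => hRSM (Or.inr (hr x))
  -- N is invariant under every element of the monoid generated by Ψ
  have hΨN : ∀ ψ ∈ Submonoid.closure Ψ, ∀ g ∈ N, ψ g ∈ N := by
    intro ψ hψ
    induction hψ using Submonoid.closure_induction with
    | mem φ hφ =>
      intro g hg
      rcases hφ with hφ | hφ
      · exact aux_inv Φ (R ∪ S) (Submonoid.subset_closure hφ.1) hg
      · rw [Set.mem_singleton_iff.mp hφ]
        exact (key N hNnormal hrN g).mp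
          (aux_inv Φ (R ∪ S) (Submonoid.subset_closure hσ) hg)
    | one => intro g hg; exact hg
    | mul a b _ _ ha hb => intro g hg; exact ha (b g) (hb g hg)
  -- M is invariant under every element of the monoid generated by Φ
  have hΦM : ∀ φ ∈ Submonoid.closure Φ, ∀ g ∈ M, φ g ∈ M := by
    intro φ hφ
    induction hφ using Submonoid.closure_induction with
    | mem φ hφ =>
      intro g hg
      by_cases hφσ : φ = σ
      · subst hφσ
        exact (key M hMnormal hrM g).mpr
          (aux_inv Ψ (R ∪ S) (Submonoid.subset_closure (Or.inr rfl)) hg)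
      · exact aux_inv Ψ (R ∪ S)
          (Submonoid.subset_closure (Or.inl ⟨hφ, hφσ⟩)) hg
    | one => intro g hg; exact hg
    | mul a b _ _ ha hb => intro g hg; exact ha (b g) (hb g hg)
  -- antisymmetry
  apply le_antisymm
  · refine Subgroup.normalClosure_le_normal ?_
    rintro x hx
    obtain ⟨φ, hφ, b, hb, rfl⟩ := by
      simpa only [Set.mem_iUnion, Set.mem_image] using hx
    exact hΦM φ hφ b (hRSM hb)
  · refine Subgroup.normalClosure_le_normal ?_
    rintro x hx
    obtain ⟨ψ, hψ, b, hb, rfl⟩ := by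
      simpa only [Set.mem_iUnion, Set.mem_image] using hx
    exact hΨN ψ hψ b (hRSN hb)
end

section
/- Let G be a group, H ⊴ G a normal subgroup, and suppose every σ in a set Φ of endomorphisms of the free group F(X) descends, along a surjection π : F(X) → G with Φ-invariant kernel, to an automorphism of G that maps H onto H. If Q and R are the normal closures in G of sets of fixed and iterated relations respectively, then conjugation by any g ∈ G maps H to H; in particular, for a finitely generated group H admitting an ascending finite L-presentation ⟨Z | ∅ | {δ₁,…,δₙ} | R⟩ in which each δᵢ induces an automorphism of H, the iterated HNN-extension G = ⟨Z ∪ {t₁,…,tₙ} | R ∪ {tᵢ⁻¹ z tᵢ = δᵢ(z) : 1 ≤ i ≤ n, z ∈ Z}⟩ is finitely presented and contains an isomorphic copy of H as a normal subgroup. -/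
/-- A group is finitely presented if it is isomorphic to the quotient of a
finitely generated free group by the normal closure of finitely many relators. -/
def IsFinitelyPresentedGroup (G : Type*) [Group G] : Prop :=
  ∃ (k : ℕ) (rels : Finset (FreeGroup (Fin k))),
    Nonempty (G ≃* PresentedGroup (↑rels : Set (FreeGroup (Fin k))))

/-- A group `H` with an ascending (hence invariant) finite L-presentation
`⟨Z | ∅ | {δ₁,…,δₙ} | R⟩` in which each `δᵢ` induces an automorphism of `H`
embeds as a normal subgroup into the finitely presented iterated HNN-extension
`G = ⟨Z ∪ {t₁,…,tₙ} | R ∪ {tᵢ⁻¹ z tᵢ = δᵢ(z)}⟩`. -/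
theorem embeds_normally_into_finitely_presented {Z : Type*} [Fintype Z]
    (n : ℕ) (δ : Fin n → Monoid.End (FreeGroup Z)) (R : Finset (FreeGroup Z))
    (rels : Set (FreeGroup Z))
    (hrels : rels = ⋃ φ ∈ Submonoid.closure (Set.range δ),
      ⇑φ '' (↑R : Set (FreeGroup Z)))
    (hinv : ∀ i : Fin n,
      ∃ α : (FreeGroup Z ⧸ Subgroup.normalClosure rels) ≃*
            (FreeGroup Z ⧸ Subgroup.normalClosure rels),
        ∀ w : FreeGroup Z,
          α (QuotientGroup.mk' (Subgroup.normalClosure rels) w) =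
            QuotientGroup.mk' (Subgroup.normalClosure rels) (δ i w))
    (ι : FreeGroup Z →* FreeGroup (Z ⊕ Fin n))
    (hι : ι = FreeGroup.map Sum.inl)
    (T : Set (FreeGroup (Z ⊕ Fin n)))
    (hT : T = (⇑ι '' (↑R : Set (FreeGroup Z))) ∪
      {w | ∃ (i : Fin n) (z : Z),
        w = (FreeGroup.of (Sum.inr i))⁻¹ * FreeGroup.of (Sum.inl z) *
            FreeGroup.of (Sum.inr i) * (ι (δ i (FreeGroup.of z)))⁻¹}) :
    IsFinitelyPresentedGroup (PresentedGroup T) ∧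
      ∃ N : Subgroup (PresentedGroup T), N.Normal ∧
        Nonempty ((FreeGroup Z ⧸ Subgroup.normalClosure rels) ≃* N) := by
  classical
  -- abbreviations
  set H := FreeGroup Z ⧸ Subgroup.normalClosure rels with hH
  choose α hα using hinv
  let mkH : FreeGroup Z →* H := QuotientGroup.mk' (Subgroup.normalClosure rels)
  let mkG : FreeGroup (Z ⊕ Fin n) →* PresentedGroup T :=
    QuotientGroup.mk' (Subgroup.normalClosure T)
  have hmkG_one : ∀ w ∈ T, mkG w = 1 := fun w hw =>
    (QuotientGroup.eq_one_iff w).2 (Subgroup.subset_normalClosure hw)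
  have hmkH_one : ∀ w ∈ rels, mkH w = 1 := fun w hw =>
    (QuotientGroup.eq_one_iff w).2 (Subgroup.subset_normalClosure hw)
  let ψ : FreeGroup Z →* PresentedGroup T := mkG.comp ι
  have hψof : ∀ z : Z, ψ (FreeGroup.of z) = mkG (FreeGroup.of (Sum.inl z)) := by
    intro z; simp only [ψ, MonoidHom.comp_apply, hι, FreeGroup.map.of]
  -- Step A : conjugation relation
  have stepA : ∀ (i : Fin n) (w : FreeGroup Z),
      ψ (δ i w) = (mkG (FreeGroup.of (Sum.inr i)))⁻¹ * ψ w * mkG (FreeGroup.of (Sum.inr i)) := by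
    intro i
    have := FreeGroup.ext_hom (ψ.comp (δ i : FreeGroup Z →* FreeGroup Z))
      ((MulAut.conj (mkG (FreeGroup.of (Sum.inr i)))⁻¹).toMonoidHom.comp ψ) ?_
    · intro w
      have h1 := DFunLike.congr_fun this w
      simp [MulAut.conj, mul_assoc] at h1
      rw [mul_assoc]; exact h1
    · intro z
      have hrel : ((FreeGroup.of (Sum.inr i))⁻¹ * FreeGroup.of (Sum.inl z) *
          FreeGroup.of (Sum.inr i) * (ι (δ i (FreeGroup.of z)))⁻¹) ∈ T := by
        rw [hT]; exact Or.inr ⟨i, z, rfl⟩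
      have h1 := hmkG_one _ hrel
      have h2 : (mkG (FreeGroup.of (Sum.inr i)))⁻¹ * mkG (FreeGroup.of (Sum.inl z)) *
          mkG (FreeGroup.of (Sum.inr i)) = ψ (δ i (FreeGroup.of z)) := by
        rw [map_mul, map_mul, map_mul, map_inv, map_inv] at h1
        exact mul_inv_eq_one.1 h1
      simp only [MonoidHom.comp_apply, MulEquiv.coe_toMonoidHom, MulAut.conj_apply,
        hψof z]
      show ψ (δ i (FreeGroup.of z)) = _
      rw [← h2]
      group
  -- Step B : relators of `rels` die in `PresentedGroup T`
  have hψR : ∀ r ∈ (R : Set (FreeGroup Z)), ψ r = 1 := by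
    intro r hr
    apply hmkG_one
    rw [hT]; exact Or.inl ⟨r, hr, rfl⟩
  have stepB : ∀ r ∈ rels, ψ r = 1 := by
    have key : ∀ φ ∈ Submonoid.closure (Set.range δ),
        ∃ g : PresentedGroup T, ∀ w, ψ (φ w) = g⁻¹ * ψ w * g := by
      intro φ hφ
      induction hφ using Submonoid.closure_induction with
      | mem φ hφ =>
          obtain ⟨i, rfl⟩ := hφ
          exact ⟨mkG (FreeGroup.of (Sum.inr i)), fun w => stepA i w⟩
      | one => exact ⟨1, fun w => by simp⟩
      | mul φ₁ φ₂ _ _ h1 h2 =>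
          obtain ⟨g₁, hg₁⟩ := h1
          obtain ⟨g₂, hg₂⟩ := h2
          refine ⟨g₂ * g₁, fun w => ?_⟩
          have : (φ₁ * φ₂) w = φ₁ (φ₂ w) := rfl
          rw [this, hg₁, hg₂]
          group
    intro r hr
    rw [hrels] at hr
    simp only [Set.mem_iUnion] at hr
    obtain ⟨φ, hφ, r₀, hr₀, rfl⟩ := hr
    obtain ⟨g, hg⟩ := key φ hφ
    rw [hg, hψR r₀ hr₀]
    group
  -- descend `ψ` to `H`
  have hker : Subgroup.normalClosure rels ≤ ψ.ker :=
    Subgroup.normalClosure_le_normal stepB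
  let ψ' : H →* PresentedGroup T := QuotientGroup.lift (Subgroup.normalClosure rels) ψ hker
  have hψ' : ∀ w, ψ' (mkH w) = ψ w := fun w => rfl
  -- the semidirect product detecting injectivity
  let φact : FreeGroup (Fin n) →* MulAut H := FreeGroup.lift (fun i => (α i : MulAut H)⁻¹)
  let fmap : Z ⊕ Fin n → H ⋊[φact] FreeGroup (Fin n) := fun x =>
    Sum.rec (fun z => SemidirectProduct.inl (mkH (FreeGroup.of z)))
      (fun i => SemidirectProduct.inr (FreeGroup.of i)) x
  have hlift_ι : ∀ w : FreeGroup Z,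
      FreeGroup.lift fmap (ι w) = SemidirectProduct.inl (mkH w) := by
    intro w
    have := FreeGroup.ext_hom ((FreeGroup.lift fmap).comp ι)
      ((SemidirectProduct.inl (φ := φact)).comp mkH) ?_
    · exact DFunLike.congr_fun this w
    · intro z
      simp [hι, fmap, mkH]
  have hrelT : ∀ r ∈ T, FreeGroup.lift fmap r = 1 := by
    intro r hr
    rw [hT] at hr
    rcases hr with ⟨r₀, hr₀, rfl⟩ | ⟨i, z, rfl⟩
    · rw [hlift_ι]
      have : mkH r₀ = 1 := by
        apply hmkH_one
        rw [hrels]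
        simp only [Set.mem_iUnion]
        exact ⟨1, Submonoid.one_mem _, r₀, hr₀, rfl⟩
      rw [this, map_one]
    · have h1 : FreeGroup.lift fmap (FreeGroup.of (Sum.inr i)) =
          SemidirectProduct.inr (FreeGroup.of i) := by simp [fmap]
      have h2 : FreeGroup.lift fmap (FreeGroup.of (Sum.inl z)) =
          SemidirectProduct.inl (mkH (FreeGroup.of z)) := by simp [fmap]
      rw [map_mul, map_mul, map_mul, map_inv, map_inv, h1, h2, hlift_ι]
      have haut : (SemidirectProduct.inr (φ := φact) (FreeGroup.of i))⁻¹ *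
          SemidirectProduct.inl (mkH (FreeGroup.of z)) *
          SemidirectProduct.inr (FreeGroup.of i) =
          SemidirectProduct.inl ((φact (FreeGroup.of i))⁻¹ (mkH (FreeGroup.of z))) := by
        rw [SemidirectProduct.inl_aut_inv]
        simp [mul_assoc]
      rw [haut]
      have hact : (φact (FreeGroup.of i))⁻¹ (mkH (FreeGroup.of z)) =
          mkH (δ i (FreeGroup.of z)) := by
        have : φact (FreeGroup.of i) = (α i : MulAut H)⁻¹ := FreeGroup.lift_apply_of
        rw [this, inv_inv]
        exact hα i (FreeGroup.of z)
      rw [hact, ← map_inv, ← map_mul, mul_inv_cancel, map_one]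
  let θ : PresentedGroup T →* H ⋊[φact] FreeGroup (Fin n) :=
    PresentedGroup.toGroup (f := fmap) (rels := T) hrelT
  have hθψ' : ∀ h : H, θ (ψ' h) = SemidirectProduct.inl h := by
    intro h
    refine QuotientGroup.induction_on h ?_
    intro w
    show θ (ψ' (mkH w)) = SemidirectProduct.inl (mkH w)
    have : θ (ψ' (mkH w)) = FreeGroup.lift fmap (ι w) := rfl
    rw [this, hlift_ι]
  have hinj : Function.Injective ψ' := by
    intro a b hab
    have : SemidirectProduct.inl (φ := φact) a = SemidirectProduct.inl b := by
      rw [← hθψ' a, ← hθψ' b, hab]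
    exact SemidirectProduct.inl_injective this
  refine ⟨?_, ψ'.range, ?_, ⟨MonoidHom.ofInjective hinj⟩⟩
  · -- finite presentation
    have hTfin : T.Finite := by
      rw [hT]
      apply Set.Finite.union
      · exact (R.finite_toSet).image _
      · have : {w | ∃ (i : Fin n) (z : Z),
            w = (FreeGroup.of (Sum.inr i))⁻¹ * FreeGroup.of (Sum.inl z) *
              FreeGroup.of (Sum.inr i) * (ι (δ i (FreeGroup.of z)))⁻¹} ⊆
            Set.range (fun p : Fin n × Z =>
              (FreeGroup.of (Sum.inr p.1))⁻¹ * FreeGroup.of (Sum.inl p.2) *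
              FreeGroup.of (Sum.inr p.1) * (ι (δ p.1 (FreeGroup.of p.2)))⁻¹) := by
          rintro w ⟨i, z, rfl⟩; exact ⟨(i, z), rfl⟩
        exact Set.Finite.subset (Set.finite_range _) this
    let e := Fintype.equivFin (Z ⊕ Fin n)
    have hT'fin : (⇑(FreeGroup.freeGroupCongr e) '' T).Finite := hTfin.image _
    refine ⟨Fintype.card (Z ⊕ Fin n), hT'fin.toFinset, ⟨?_⟩⟩
    have hcoe : (↑hT'fin.toFinset : Set (FreeGroup (Fin (Fintype.card (Z ⊕ Fin n))))) =
        ⇑(FreeGroup.freeGroupCongr e) '' T := hT'fin.coe_toFinset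
    rw [hcoe]
    exact PresentedGroup.equivPresentedGroup T e
  · -- normality
    rw [← Subgroup.normalizer_eq_top_iff, eq_top_iff]
    intro g _
    refine QuotientGroup.induction_on g ?_
    intro w
    have key : ∀ x : Z ⊕ Fin n, mkG (FreeGroup.of x) ∈ Subgroup.normalizer (ψ'.range : Set (PresentedGroup T)) := by
      intro x
      cases x with
      | inl z =>
          apply Subgroup.le_normalizer
          exact ⟨mkH (FreeGroup.of z), (hψ' _).trans (hψof z)⟩
      | inr i =>
          set t := mkG (FreeGroup.of (Sum.inr i)) with ht
          have hconj : ∀ h : H, t⁻¹ * ψ' h * t = ψ' (α i h) := by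
            intro h
            refine QuotientGroup.induction_on h ?_
            intro v
            show t⁻¹ * ψ' (mkH v) * t = ψ' (α i (mkH v))
            rw [hψ', ← stepA i v, hα i v]
            rfl
          rw [Subgroup.mem_normalizer_iff]
          intro h
          constructor
          · rintro ⟨h₀, rfl⟩
            refine ⟨(α i).symm h₀, ?_⟩
            have h2 := hconj ((α i).symm h₀)
            rw [MulEquiv.apply_symm_apply] at h2
            rw [← h2]
            group
          · rintro ⟨h₀, hh₀⟩
            refine ⟨α i h₀, ?_⟩
            rw [← hconj h₀, hh₀]
            group
    refine FreeGroup.induction_on w ?_ ?_ ?_ ?_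
    · show mkG 1 ∈ _
      rw [map_one]
      exact Subgroup.one_mem _
    · intro x; exact key x
    · intro x hx
      show mkG (FreeGroup.of x)⁻¹ ∈ _
      rw [map_inv]
      exact Subgroup.inv_mem _ (key x)
    · intro u v hu hv
      show mkG (u * v) ∈ _
      rw [map_mul]
      exact Subgroup.mul_mem _ hu hv
end
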